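/- The plane-wave u = a·exp(i·k·(x-ct)) with k = (1/3)(±√(3+c²/a⁴) + c/a²), for any real constants a ≠ 0 and c, is a travelling-wave solution of the NLS-type peakon equation i·v_t + i(Im(ū u_x)v)_x + (1/2)(|u|²-|u_x|²)v = 0, where v = u - u_xx. -/

import Mathlib

open Complex

noncomputable section

def pdt (f : ℝ → ℝ → ℂ) (t x : ℝ) : ℂ := deriv (fun s => f s x) t
def pdx (f : ℝ → ℝ → ℂ) (t x : ℝ) : ℂ := deriv (fun y => f t y) x

/-- NLS-type peakon equation. -/
def NLSPeakonEq (u v : ℝ → ℝ → ℂ) : Prop :=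
  ∀ t x : ℝ,
    Complex.I * pdt v t x
      + Complex.I * pdx (fun t x =>
          (((((starRingEnd ℂ) (u t x)) * pdx u t x).im : ℝ) : ℂ) * v t x) t x
      + (1/2) * ((Complex.normSq (u t x) - Complex.normSq (pdx u t x) : ℝ) : ℂ) * v t x = 0

lemma hasD (A B : ℂ) (a t : ℝ) :
    HasDerivAt (fun s : ℝ => (a : ℂ) * Complex.exp (A * s + B))
      (A * ((a : ℂ) * Complex.exp (A * t + B))) t := by
  have h1 : HasDerivAt (fun z : ℂ => A * z + B) A (t : ℂ) := by
    simpa using ((hasDerivAt_id ((t : ℝ) : ℂ)).const_mul A).add_const B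
  have h2 := (Complex.hasDerivAt_exp (A * t + B)).comp ((t : ℝ) : ℂ) h1
  have h3 := h2.const_mul (a : ℂ)
  have h4 : HasDerivAt (fun z : ℂ => (a : ℂ) * Complex.exp (A * z + B))
      (A * ((a : ℂ) * Complex.exp (A * t + B))) (t : ℂ) := by
    exact h3.congr_deriv (by ring)
  exact h4.comp_ofReal

theorem nls_planewave_solution (a c ε k : ℝ) (ha : a ≠ 0) (hε : ε = 1 ∨ ε = -1)
    (hk : k = (1/3) * (ε * Real.sqrt (3 + c^2/a^4) + c/a^2))
    (u v : ℝ → ℝ → ℂ)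
    (hu : ∀ t x : ℝ, u t x = (a : ℂ) *
      Complex.exp (Complex.I * (k : ℂ) * ((x : ℂ) - (c : ℂ) * t)))
    (hv : ∀ t x : ℝ, v t x = u t x - pdx (pdx u) t x) :
    NLSPeakonEq u v := by
  -- the dispersion relation
  have ha2 : a^2 ≠ 0 := pow_ne_zero 2 ha
  have hε2 : ε^2 = 1 := by rcases hε with h | h <;> rw [h] <;> norm_num
  have hs : Real.sqrt (3 + c^2/a^4) ^ 2 = 3 + c^2/a^4 :=
    Real.sq_sqrt (by positivity)
  have hkey : 3*k^2*a^2 - 2*k*c - a^2 = 0 := by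
    have h3 : ε * Real.sqrt (3 + c^2/a^4) * a^2 = 3*k*a^2 - c := by
      rw [hk]; field_simp; ring
    have h4 : (ε * Real.sqrt (3 + c^2/a^4) * a^2)^2 = (3*k*a^2 - c)^2 := by rw [h3]
    have h5 : (3*k*a^2 - c)^2 = 3*a^4 + c^2 := by
      rw [← h4]
      have : (ε * Real.sqrt (3 + c^2/a^4) * a^2)^2
          = ε^2 * (Real.sqrt (3 + c^2/a^4))^2 * a^4 := by ring
      rw [this, hε2, hs]
      field_simp
    have h6 : (3*k^2*a^2 - 2*k*c - a^2) * (3*a^2) = 0 := by nlinarith [h5]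
    have h7 : (3:ℝ)*a^2 ≠ 0 := by positivity
    exact (mul_eq_zero.mp h6).resolve_right h7
  have hkeyC : 3*(k:ℂ)^2*(a:ℂ)^2 - 2*(k:ℂ)*(c:ℂ) - (a:ℂ)^2 = 0 := by
    exact_mod_cast congrArg (Complex.ofReal) hkey
  -- derivative facts
  have huy : ∀ t' y : ℝ, u t' y = (a : ℂ) *
      Complex.exp ((Complex.I*(k:ℂ)) * (y:ℝ) + (-(Complex.I*(k:ℂ)*(c:ℂ))) * (t':ℝ)) := by
    intro t' y
    rw [hu]
    congr 2
    push_cast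
    ring
  have huy2 : ∀ t' y : ℝ, u t' y = (a : ℂ) *
      Complex.exp ((-(Complex.I*(k:ℂ)*(c:ℂ))) * (t':ℝ) + (Complex.I*(k:ℂ)) * (y:ℝ)) := by
    intro t' y
    rw [huy]
    congr 2
    ring
  have hux : ∀ t' y : ℝ, HasDerivAt (fun y' : ℝ => u t' y')
      (Complex.I*(k:ℂ) * u t' y) y := by
    intro t' y
    have h := hasD (Complex.I*(k:ℂ)) ((-(Complex.I*(k:ℂ)*(c:ℂ))) * (t':ℝ)) a y
    simp only [← huy] at h
    exact h
  have hut : ∀ t' y : ℝ, HasDerivAt (fun s : ℝ => u s y)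
      ((-(Complex.I*(k:ℂ)*(c:ℂ))) * u t' y) t' := by
    intro t' y
    have h := hasD (-(Complex.I*(k:ℂ)*(c:ℂ))) ((Complex.I*(k:ℂ)) * (y:ℝ)) a t'
    simp only [← huy2] at h
    exact h
  have hpdx : ∀ t' y : ℝ, pdx u t' y = Complex.I*(k:ℂ) * u t' y :=
    fun t' y => (hux t' y).deriv
  have hpdxx : ∀ t' y : ℝ, pdx (pdx u) t' y = -(k:ℂ)^2 * u t' y := by
    intro t' y
    have hfun : (fun y' : ℝ => pdx u t' y') = fun y' : ℝ => Complex.I*(k:ℂ) * u t' y' :=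
      funext (hpdx t')
    show deriv (fun y' : ℝ => pdx u t' y') y = _
    rw [hfun, ((hux t' y).const_mul (Complex.I*(k:ℂ))).deriv]
    linear_combination ((k:ℂ)^2 * u t' y) * Complex.I_sq
  have hv2 : ∀ t' y : ℝ, v t' y = (1+(k:ℂ)^2) * u t' y := by
    intro t' y
    rw [hv, hpdxx]
    ring
  have hns : ∀ t' y : ℝ, Complex.normSq (u t' y) = a^2 := by
    intro t' y
    rw [hu]
    have : Complex.I * (k:ℂ) * ((y:ℂ) - (c:ℂ)*(t':ℂ)) = ((k*(y - c*t') : ℝ) : ℂ) * Complex.I := by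
      push_cast; ring
    rw [this, Complex.normSq_mul, Complex.normSq_ofReal, Complex.normSq_eq_norm_sq,
      Complex.norm_exp_ofReal_mul_I]
    ring
  have hns2 : ∀ t' y : ℝ, Complex.normSq (pdx u t' y) = k^2*a^2 := by
    intro t' y
    rw [hpdx, Complex.normSq_mul, Complex.normSq_mul, hns, Complex.normSq_ofReal,
      Complex.normSq_I]
    ring
  have him : ∀ t' y : ℝ, ((starRingEnd ℂ) (u t' y) * pdx u t' y).im = k * a^2 := by
    intro t' y
    rw [hpdx]
    have h0 : (starRingEnd ℂ) (u t' y) * (Complex.I*(k:ℂ) * u t' y)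
        = Complex.I * (k:ℂ) * ((Complex.normSq (u t' y) : ℝ) : ℂ) := by
      have h1 : u t' y * (starRingEnd ℂ) (u t' y) = ((Complex.normSq (u t' y) : ℝ) : ℂ) :=
        Complex.mul_conj _
      linear_combination Complex.I * (k:ℂ) * h1
    rw [h0, hns]
    have h2 : Complex.I * (k:ℂ) * ((a^2 : ℝ) : ℂ) = ((k*a^2 : ℝ) : ℂ) * Complex.I := by
      push_cast; ring
    rw [h2, Complex.mul_im, Complex.ofReal_re, Complex.ofReal_im, Complex.I_re, Complex.I_im]; ring
  intro t x
  have hpdtv : pdt v t x = (1+(k:ℂ)^2) * ((-(Complex.I*(k:ℂ)*(c:ℂ))) * u t x) := by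
    have hfun : (fun s : ℝ => v s x) = fun s : ℝ => (1+(k:ℂ)^2) * u s x :=
      funext fun s => hv2 s x
    show deriv (fun s : ℝ => v s x) t = _
    rw [hfun, ((hut t x).const_mul (1+(k:ℂ)^2)).deriv]
  have hmid : pdx (fun t x =>
        (((((starRingEnd ℂ) (u t x)) * pdx u t x).im : ℝ) : ℂ) * v t x) t x
      = (((k*a^2 : ℝ) : ℂ) * (1+(k:ℂ)^2)) * (Complex.I*(k:ℂ) * u t x) := by
    show deriv (fun y : ℝ =>
        (((((starRingEnd ℂ) (u t y)) * pdx u t y).im : ℝ) : ℂ) * v t y) x = _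
    have hfun : (fun y : ℝ =>
          (((((starRingEnd ℂ) (u t y)) * pdx u t y).im : ℝ) : ℂ) * v t y)
        = fun y : ℝ => (((k*a^2 : ℝ) : ℂ) * (1+(k:ℂ)^2)) * u t y := by
      funext y
      rw [him, hv2]
      ring
    rw [hfun, ((hux t x).const_mul (((k*a^2 : ℝ) : ℂ) * (1+(k:ℂ)^2))).deriv]
  show Complex.I * pdt v t x + _ + _ = 0
  rw [hpdtv, hmid, hns, hns2, hv2]
  push_cast
  linear_combination (-(1+(k:ℂ)^2) * u t x / 2) * hkeyC
    + ((1+(k:ℂ)^2) * u t x * ((k:ℂ)^2*(a:ℂ)^2 - (k:ℂ)*(c:ℂ))) * Complex.I_sq
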